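/- Let L be a finite-dimensional ω-Lie algebra, U a vector space complement of [L,L] in L, and L̃ = L·t + [L,L]·t² + U·t² the enlarged ω-Lie algebra with bracket [a·t,b·t] = [a,b]·t² (other products zero). For a quasiderivation f of L with associated map f′, define δ_U(f) : L̃ → L̃ by a·t + b·t² + u·t² ↦ f(a)·t + f′(b)·t², where a ∈ L, b ∈ [L,L], u ∈ U. Then δ_U(f) is a derivation of L̃: δ_U(f)([X,Y]) = [δ_U(f)(X), Y] + [X, δ_U(f)(Y)] for all X,Y ∈ L̃. -/

import Mathlib

theorem stmt9 {K L : Type*} [Field K] [CharZero K] [AddCommGroup L] [Module K L]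
    [FiniteDimensional K L]
    (br : L →ₗ[K] L →ₗ[K] L) (ω : L →ₗ[K] L →ₗ[K] K)
    (hanti : ∀ x y, br x y = - br y x)
    (hskew : ∀ x y, ω x y = - ω y x)
    (hjac : ∀ x y z, br (br x y) z + br (br y z) x + br (br z x) y
      = ω x y • z + ω y z • x + ω z x • y)
    (D U : Submodule K L)
    (hD : D = Submodule.span K {z : L | ∃ x y, z = br x y})
    (hcompl : IsCompl D U)
    (f f' : L →ₗ[K] L)
    (hq : ∀ x y, br (f x) y + br x (f y) = f' (br x y)) :
    let π : L →ₗ[K] D := Submodule.linearProjOfIsCompl D U hcompl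
    let δ : L × L → L × L := fun X => (f X.1, f' ((π X.2 : L)))
    let tbr : (L × L) → (L × L) → (L × L) := fun X Y => (0, br X.1 Y.1)
    ∀ X Y, δ (tbr X Y) = tbr (δ X) Y + tbr X (δ Y) := by
  intro π δ tbr X Y
  have hmem : br X.1 Y.1 ∈ D := by
    rw [hD]; exact Submodule.subset_span ⟨X.1, Y.1, rfl⟩
  have hπ : (π (br X.1 Y.1) : L) = br X.1 Y.1 := by
    have := Submodule.linearProjOfIsCompl_apply_left hcompl ⟨br X.1 Y.1, hmem⟩
    exact congrArg (Subtype.val) this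
  simp only [δ, tbr, Prod.mk_add_mk, Prod.mk.injEq, hπ]
  refine ⟨by simp, ?_⟩
  rw [← hq]
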